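/- Let E be a real inner product space and let g1, g2 ∈ E be nonzero vectors. Define the GH-aggregated gradient g̃ = g1 + g2 - δ(⟪g1,g2⟫ < 0)·(⟪g1,g2⟫/‖g2‖²)·g2 - δ(⟪g1,g2⟫ < 0)·(⟪g1,g2⟫/‖g1‖²)·g1. Then ⟪g̃, g1⟫ ≥ 0 and ⟪g̃, g2⟫ ≥ 0; that is, the overall harmonized gradient is a non-ascent direction for neither task—it forms a non-obtuse angle with both original task gradients. -/

import Mathlib

open scoped RealInnerProductSpace

/-- **Theorem 1 (GH).** For nonzero task gradients `g1, g2`, the overall GH-aggregated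
gradient `g̃ = g1 + g2 - δ(⟪g1,g2⟫<0)·(⟪g1,g2⟫/‖g2‖²) • g2 - δ(⟪g1,g2⟫<0)·(⟪g1,g2⟫/‖g1‖²) • g1`
forms a non-obtuse angle with both original gradients: `⟪g̃,g1⟫ ≥ 0` and `⟪g̃,g2⟫ ≥ 0`. -/
theorem gh_aggregated_no_conflict {E : Type*} [NormedAddCommGroup E] [InnerProductSpace ℝ E]
    (g1 g2 : E) (hg1 : g1 ≠ 0) (hg2 : g2 ≠ 0)
    (gt : E)
    (hgt : gt = g1 + g2 - ((if ⟪g1, g2⟫ < 0 then (1 : ℝ) else 0) * (⟪g1, g2⟫ / ‖g2‖ ^ 2)) • g2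
        - ((if ⟪g1, g2⟫ < 0 then (1 : ℝ) else 0) * (⟪g1, g2⟫ / ‖g1‖ ^ 2)) • g1) :
    0 ≤ ⟪gt, g1⟫ ∧ 0 ≤ ⟪gt, g2⟫ := by
  have h1 : (0:ℝ) < ‖g1‖ := norm_pos_iff.mpr hg1
  have h2 : (0:ℝ) < ‖g2‖ := norm_pos_iff.mpr hg2
  have hcs : ⟪g1, g2⟫ * ⟪g1, g2⟫ ≤ ‖g1‖ * ‖g2‖ * (‖g1‖ * ‖g2‖) := by
    have := abs_real_inner_le_norm g1 g2
    nlinarith [abs_nonneg ⟪g1, g2⟫, sq_abs ⟪g1, g2⟫]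
  have e1 : ⟪g1, g1⟫ = ‖g1‖ ^ 2 := real_inner_self_eq_norm_sq g1
  have e2 : ⟪g2, g2⟫ = ‖g2‖ ^ 2 := real_inner_self_eq_norm_sq g2
  have e21 : ⟪g2, g1⟫ = ⟪g1, g2⟫ := real_inner_comm g1 g2
  subst hgt
  by_cases hc : ⟪g1, g2⟫ < 0 <;>
    simp only [hc, if_pos, if_true, if_false, one_mul, zero_mul, zero_smul, sub_zero,
      inner_sub_left, inner_add_left, inner_smul_left, RCLike.conj_to_real, e1, e2, e21]
  · constructor
    · have : ‖g1‖ ^ 2 - ⟪g1, g2⟫ * ⟪g1, g2⟫ / ‖g2‖ ^ 2 ≥ 0 := by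
        rw [ge_iff_le, sub_nonneg, div_le_iff₀ (by positivity)]
        nlinarith
      have hne : ‖g1‖ ^ 2 ≠ 0 := by positivity
      field_simp
      rw [zero_mul]
      nlinarith
    · have hne : ‖g2‖ ^ 2 ≠ 0 := by positivity
      field_simp
      rw [zero_mul]
      nlinarith
  · push_neg at hc
    constructor <;> nlinarith [sq_nonneg ‖g1‖, sq_nonneg ‖g2‖]
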